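/- Let m be a nonnegative integer and n a nonnegative even integer. The map σ sending (α_1, α_2, α_3, …) to (α_2, α_3, …) is a bijection from the set of binary partitions of n with α_1 = 0 and 2^{m+3-i} ∣ α_i for all 2 ≤ i ≤ m+2, onto the set P_m(n/2) of binary partitions of n/2 satisfying 2^{m+2-i} ∣ α_i for all 1 ≤ i ≤ m+1. In particular these two sets have the same cardinality. -/

import Mathlib

/-- The integer partitioned by the binary partition `α`, where `α i` is the
number of parts equal to `2 ^ i` (so `α i` is the `α_{i+1}` of the paper). -/
def binWeight (α : ℕ →₀ ℕ) : ℕ := α.sum fun i a => a * 2 ^ i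

/-- `Pm m n` is the set of binary partitions of `n` satisfying the divisibility
conditions `2 ^ (m + 2 - i) ∣ α_i` for `1 ≤ i ≤ m + 1` (written here with the
index shifted down by one).  For `n < 0` the set is empty. -/
def Pm (m : ℕ) (n : ℤ) : Set (ℕ →₀ ℕ) :=
  {α | (binWeight α : ℤ) = n ∧ ∀ i ≤ m, 2 ^ (m + 1 - i) ∣ α i}

/-- The map `σ` sending `(α₁, α₂, α₃, …)` to `(α₂, α₃, …)`. -/
noncomputable def sigmaShift (α : ℕ →₀ ℕ) : ℕ →₀ ℕ :=
  Finsupp.comapDomain Nat.succ α (Nat.succ_injective.injOn)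

/-- The inverse shift, prepending a zero. -/
noncomputable def upShift (α : ℕ →₀ ℕ) : ℕ →₀ ℕ :=
  Finsupp.embDomain ⟨Nat.succ, Nat.succ_injective⟩ α

lemma sigmaShift_apply (α : ℕ →₀ ℕ) (i : ℕ) : sigmaShift α i = α (i + 1) := rfl

lemma upShift_apply_succ (α : ℕ →₀ ℕ) (i : ℕ) : upShift α (i + 1) = α i :=
  Finsupp.embDomain_apply_self ⟨Nat.succ, Nat.succ_injective⟩ α i

lemma upShift_apply_zero (α : ℕ →₀ ℕ) : upShift α 0 = 0 := by
  apply Finsupp.embDomain_notin_range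
  rintro ⟨i, hi⟩
  exact Nat.succ_ne_zero i hi

lemma sigmaShift_upShift (α : ℕ →₀ ℕ) : sigmaShift (upShift α) = α := by
  ext i
  rw [sigmaShift_apply, upShift_apply_succ]

lemma upShift_sigmaShift (α : ℕ →₀ ℕ) (h0 : α 0 = 0) : upShift (sigmaShift α) = α := by
  ext i
  cases i with
  | zero => rw [upShift_apply_zero, h0]
  | succ i => rw [upShift_apply_succ, sigmaShift_apply]

lemma binWeight_upShift (α : ℕ →₀ ℕ) : binWeight (upShift α) = 2 * binWeight α := by
  unfold binWeight upShift
  rw [Finsupp.sum_embDomain, Finsupp.mul_sum]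
  apply Finsupp.sum_congr
  intro i _
  simp [pow_succ]
  ring

theorem stmt6 (m n : ℕ) (hn : 2 ∣ n) :
    Set.BijOn sigmaShift
      {α : ℕ →₀ ℕ | binWeight α = n ∧ α 0 = 0 ∧
        ∀ i, 1 ≤ i → i ≤ m + 1 → 2 ^ (m + 2 - i) ∣ α i}
      (Pm m ((n / 2 : ℕ) : ℤ)) ∧
    Nat.card {α : ℕ →₀ ℕ | binWeight α = n ∧ α 0 = 0 ∧
        ∀ i, 1 ≤ i → i ≤ m + 1 → 2 ^ (m + 2 - i) ∣ α i} =
      Nat.card (Pm m ((n / 2 : ℕ) : ℤ)) := by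
  have hbij : Set.BijOn sigmaShift
      {α : ℕ →₀ ℕ | binWeight α = n ∧ α 0 = 0 ∧
        ∀ i, 1 ≤ i → i ≤ m + 1 → 2 ^ (m + 2 - i) ∣ α i}
      (Pm m ((n / 2 : ℕ) : ℤ)) := by
    constructor
    · rintro α ⟨hw, h0, hdvd⟩
      have key : 2 * binWeight (sigmaShift α) = n := by
        rw [← binWeight_upShift, upShift_sigmaShift α h0, hw]
      constructor
      · have : binWeight (sigmaShift α) = n / 2 := by omega
        exact_mod_cast this
      · intro i hi
        have := hdvd (i + 1) (by omega) (by omega)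
        rw [sigmaShift_apply]
        convert this using 2
        omega
    constructor
    · rintro α ⟨hw, h0, -⟩ β ⟨hw', h0', -⟩ h
      rw [← upShift_sigmaShift α h0, ← upShift_sigmaShift β h0', h]
    · rintro β ⟨hw, hdvd⟩
      refine ⟨upShift β, ⟨?_, upShift_apply_zero β, ?_⟩, sigmaShift_upShift β⟩
      · have hw' : binWeight β = n / 2 := by exact_mod_cast hw
        rw [binWeight_upShift, hw']
        omega
      · intro i hi1 hi2
        obtain ⟨j, rfl⟩ := Nat.exists_eq_add_of_le hi1
        have e : 1 + j = j + 1 := by omega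
        rw [e, upShift_apply_succ]
        have := hdvd j (by omega)
        convert this using 2
        omega
  refine ⟨hbij, Nat.card_congr hbij.equiv⟩
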